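/- Let d ≥ 1 and let λ : {0,…,d−1} → ℝ be nonnegative with ∑_j λ_j² = 1. Let ψ = ∑_j λ_j e_j ⊗ e_j ∈ ℂ^d ⊗ ℂ^d, where {e_j} is the standard basis. Then the negativity of the pure state projector |ψ⟩⟨ψ| (with respect to the bipartition into the two tensor factors) equals ((∑_j λ_j)² − 1)/2. -/

import Mathlib

open scoped Matrix Kronecker ComplexOrder

noncomputable section

/-- Hermitian inner product on `n → ℂ` (conjugate-linear in the first argument). -/
def cinner {n : Type*} [Fintype n] (v w : n → ℂ) : ℂ :=
  ∑ i, (starRingEnd ℂ) (v i) * w i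

/-- Tensor (Kronecker) product of vectors. -/
def tensorVec {α β : Type*} (v : α → ℂ) (w : β → ℂ) : α × β → ℂ :=
  fun p => v p.1 * w p.2

/-- The projector `|v⟩⟨v|`. -/
def vecProj {n : Type*} (v : n → ℂ) : Matrix n n ℂ :=
  Matrix.of fun i j => v i * (starRingEnd ℂ) (v j)

/-- A density matrix: positive semidefinite with unit trace. -/
def IsDensityMatrix {n : Type*} [Fintype n] (ρ : Matrix n n ℂ) : Prop :=
  ρ.PosSemidef ∧ ρ.trace = 1

open Classical in
/-- Positive semidefinite square root (0 on non-PSD input). -/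
def msqrt {n : Type*} [Fintype n] [DecidableEq n] (ρ : Matrix n n ℂ) : Matrix n n ℂ :=
  if h : ρ.PosSemidef then
    (h.1.eigenvectorUnitary : Matrix n n ℂ) * Matrix.diagonal ((↑) ∘ (√·) ∘ h.1.eigenvalues) *
      (star h.1.eigenvectorUnitary : Matrix n n ℂ) else 0

/-- Uhlmann root fidelity `F(ρ,σ) = tr √(√ρ σ √ρ)`. -/
def rootFidelity {n : Type*} [Fintype n] [DecidableEq n] (ρ σ : Matrix n n ℂ) : ℝ :=
  ((msqrt (msqrt ρ * σ * msqrt ρ)).trace).re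

/-- Partial trace over the second tensor factor. -/
def ptraceC {α γ : Type*} [Fintype γ] (ρ : Matrix (α × γ) (α × γ) ℂ) : Matrix α α ℂ :=
  Matrix.of fun i j => ∑ k, ρ (i, k) (j, k)

/-- Partial trace over the first tensor factor. -/
def ptraceA {α β : Type*} [Fintype α] (ρ : Matrix (α × β) (α × β) ℂ) : Matrix β β ℂ :=
  Matrix.of fun i j => ∑ k, ρ (k, i) (k, j)

/-- Partial transpose on the second tensor factor. -/
def ptB {α β : Type*} (ρ : Matrix (α × β) (α × β) ℂ) : Matrix (α × β) (α × β) ℂ :=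
  Matrix.of fun p q => ρ (p.1, q.2) (q.1, p.2)

open Classical in
/-- Negativity: the sum of the absolute values of the negative eigenvalues of
the partial transpose (0 if the partial transpose is not Hermitian). -/
def negativity {α β : Type*} [Fintype α] [Fintype β] [DecidableEq α] [DecidableEq β]
    (ρ : Matrix (α × β) (α × β) ℂ) : ℝ :=
  if h : (ptB ρ).IsHermitian then ∑ i, max 0 (- h.eigenvalues i) else 0

/-- A family of vectors is an orthonormal basis family (orthonormal, indexed by the
same finite type as the dimension, hence a basis). -/
def IsONB {n : Type*} [Fintype n] [DecidableEq n] (x : n → n → ℂ) : Prop :=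
  ∀ j k, cinner (x j) (x k) = if j = k then 1 else 0

/-- Separability: a finite convex combination of projectors onto product unit vectors. -/
def IsSeparableDM {α β : Type*} [Fintype α] [Fintype β]
    (ρ : Matrix (α × β) (α × β) ℂ) : Prop :=
  ∃ (m : ℕ) (p : Fin m → ℝ) (a : Fin m → α → ℂ) (b : Fin m → β → ℂ),
    (∀ j, 0 ≤ p j) ∧ (∑ j, p j = 1) ∧
    (∀ j, cinner (a j) (a j) = 1) ∧ (∀ j, cinner (b j) (b j) = 1) ∧
    ρ = ∑ j, (p j : ℂ) • vecProj (tensorVec (a j) (b j))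

/-- A maximally entangled state on `ℂ^d ⊗ ℂ^d`. -/
def IsMaxEnt {d : ℕ} (Ψ : Fin d × Fin d → ℂ) : Prop :=
  ∃ x y : Fin d → Fin d → ℂ, IsONB x ∧ IsONB y ∧
    Ψ = ((Real.sqrt d : ℂ)⁻¹) • ∑ j, tensorVec (x j) (y j)

/-- Standard basis vector `e_j` of `ℂ^d`. -/
def ket {d : ℕ} (j : Fin d) : Fin d → ℂ := fun i => if i = j then 1 else 0

/-- The vector `e₀` of `ℂ^d` (first standard basis vector). -/
def e₀ (d : ℕ) : Fin d → ℂ := fun i => if (i : ℕ) = 0 then 1 else 0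

section NegativityAux
open Polynomial Matrix

lemma myCharpoly_diagonal {n : Type*} [Fintype n] [DecidableEq n] (e : n → ℂ) :
    (Matrix.diagonal e).charpoly = ∏ i, (X - C (e i)) := by
  have h : charmatrix (Matrix.diagonal e) = Matrix.diagonal (fun i => X - C (e i)) := by
    ext i j
    by_cases hij : i = j
    · subst hij; simp
    · simp [hij, Matrix.diagonal_apply_ne _ hij]
  rw [Matrix.charpoly, h, Matrix.det_diagonal]

lemma myCharpoly_conj {n : Type*} [Fintype n] [DecidableEq n] (U B : Matrix n n ℂ)
    (hU : U ∈ Matrix.unitaryGroup n ℂ) :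
    (U * B * star U).charpoly = B.charpoly := by
  have hUV : (C : ℂ →+* ℂ[X]).mapMatrix U * (C : ℂ →+* ℂ[X]).mapMatrix (star U) = 1 := by
    rw [← RingHom.map_mul, Matrix.mem_unitaryGroup_iff.mp hU, RingHom.map_one]
  have hchar : charmatrix (U * B * star U) =
      (C : ℂ →+* ℂ[X]).mapMatrix U * charmatrix B * (C : ℂ →+* ℂ[X]).mapMatrix (star U) := by
    unfold charmatrix
    rw [Matrix.mul_sub, Matrix.sub_mul]
    congr 1
    · rw [Matrix.scalar_apply, Matrix.mul_assoc, ← Matrix.smul_eq_diagonal_mul,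
        Matrix.mul_smul, hUV, Matrix.smul_eq_diagonal_mul, Matrix.mul_one]
    · simp [← RingHom.map_mul, Matrix.mul_assoc]
  rw [Matrix.charpoly, hchar, Matrix.det_mul, Matrix.det_mul, Matrix.charpoly]
  have : ((C : ℂ →+* ℂ[X]).mapMatrix U).det * ((C : ℂ →+* ℂ[X]).mapMatrix (star U)).det = 1 := by
    rw [← Matrix.det_mul, hUV, Matrix.det_one]
  calc ((C : ℂ →+* ℂ[X]).mapMatrix U).det * (charmatrix B).det * ((C : ℂ →+* ℂ[X]).mapMatrix (star U)).det
      = (((C : ℂ →+* ℂ[X]).mapMatrix U).det * ((C : ℂ →+* ℂ[X]).mapMatrix (star U)).det) * (charmatrix B).det := by ring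
    _ = (charmatrix B).det := by rw [this, one_mul]

lemma eig_sum_fun {n : Type*} [Fintype n] [DecidableEq n] {A : Matrix n n ℂ}
    (hA : A.IsHermitian) (U : Matrix n n ℂ) (hU : U ∈ Matrix.unitaryGroup n ℂ) (D : n → ℝ)
    (hAeq : A = U * Matrix.diagonal (fun i => (D i : ℂ)) * star U) (g : ℝ → ℝ) :
    ∑ i, g (hA.eigenvalues i) = ∑ i, g (D i) := by
  have h1 : A.charpoly = ∏ i, (X - C ((hA.eigenvalues i : ℝ) : ℂ)) := by
    conv_lhs => rw [hA.spectral_theorem]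
    rw [Unitary.conjStarAlgAut_apply, myCharpoly_conj _ _ (hA.eigenvectorUnitary).2, myCharpoly_diagonal]
    rfl
  have h2 : A.charpoly = ∏ i, (X - C ((D i : ℝ) : ℂ)) := by
    conv_lhs => rw [hAeq]
    rw [myCharpoly_conj _ _ hU, myCharpoly_diagonal]
  have hms : Multiset.map (fun i => ((hA.eigenvalues i : ℝ) : ℂ)) Finset.univ.val
      = Multiset.map (fun i => ((D i : ℝ) : ℂ)) Finset.univ.val := by
    have r1 := Polynomial.roots_multiset_prod_X_sub_C
      (Multiset.map (fun i => ((hA.eigenvalues i : ℝ) : ℂ)) Finset.univ.val)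
    have r2 := Polynomial.roots_multiset_prod_X_sub_C
      (Multiset.map (fun i => ((D i : ℝ) : ℂ)) Finset.univ.val)
    rw [Multiset.map_map] at r1 r2
    have : ((Finset.univ.val.map (fun i => (X - C (((hA.eigenvalues i : ℝ) : ℂ))))).prod)
        = ((Finset.univ.val.map (fun i => (X - C (((D i : ℝ) : ℂ))))).prod) := by
      rw [← Finset.prod_eq_multiset_prod, ← Finset.prod_eq_multiset_prod, ← h1, ← h2]
    rw [← r1, ← r2]
    exact congrArg _ (by simpa using this)
  have hreal : Multiset.map hA.eigenvalues Finset.univ.val = Multiset.map D Finset.univ.val := by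
    apply Multiset.map_injective (f := (fun x : ℝ => (x : ℂ))) Complex.ofReal_injective
    rw [Multiset.map_map, Multiset.map_map]
    exact hms
  calc ∑ i, g (hA.eigenvalues i) = ((Multiset.map hA.eigenvalues Finset.univ.val).map g).sum := by
        rw [Multiset.map_map]; rfl
    _ = ((Multiset.map D Finset.univ.val).map g).sum := by rw [hreal]
    _ = ∑ i, g (D i) := by rw [Multiset.map_map]; rfl


namespace NegAux

variable {d : ℕ}

def Dv (lam : Fin d → ℝ) : Fin d × Fin d → ℝ :=
  fun p => if p.1 ≤ p.2 then lam p.1 * lam p.2 else -(lam p.1 * lam p.2)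

def Mm (lam : Fin d → ℝ) : Matrix (Fin d × Fin d) (Fin d × Fin d) ℂ :=
  Matrix.of fun p q => if q = p.swap then ((lam p.1 * lam p.2 : ℝ) : ℂ) else 0

def cc : ℝ := (Real.sqrt 2)⁻¹

lemma cc_sq : cc * cc = 1/2 := by
  rw [cc, ← mul_inv, Real.mul_self_sqrt (by norm_num)]; norm_num

lemma cc_sqC : (cc : ℂ) * (cc : ℂ) = 1/2 := by
  rw [show ((cc:ℝ):ℂ) * ((cc:ℝ):ℂ) = ((cc*cc : ℝ):ℂ) by push_cast; ring, cc_sq]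
  push_cast; ring

def al : Fin d × Fin d → ℂ := fun q => if q.1 = q.2 then 1 else (cc : ℂ)
def be : Fin d × Fin d → ℂ :=
  fun q => if q.1 = q.2 then 0 else if q.1 < q.2 then (cc : ℂ) else -(cc : ℂ)

def Uu (d : ℕ) : Matrix (Fin d × Fin d) (Fin d × Fin d) ℂ :=
  Matrix.of fun p q => al q * (if p = q then 1 else 0) + be q * (if p = q.swap then 1 else 0)

lemma sum_pair {n : Type*} [Fintype n] [DecidableEq n] (a b : n) (A B : ℂ) (f : n → ℂ) :
    ∑ r, (A * (if r = a then 1 else 0) + B * (if r = b then 1 else 0)) * f r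
      = A * f a + B * f b := by
  have h1 : ∀ (C : ℂ) (c : n), ∑ r, C * (if r = c then 1 else 0) * f r = C * f c := by
    intro C c
    rw [Finset.sum_eq_single c]
    · simp
    · intro r _ hr; simp [hr]
    · intro h; exact absurd (Finset.mem_univ c) h
  simp only [add_mul, Finset.sum_add_distrib, h1]

lemma conj_al (p : Fin d × Fin d) : (starRingEnd ℂ) (al p) = al p := by
  unfold al; split_ifs <;> simp [Complex.conj_ofReal]

lemma conj_be (p : Fin d × Fin d) : (starRingEnd ℂ) (be p) = be p := by
  unfold be; split_ifs <;> simp [Complex.conj_ofReal]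

lemma be_swap (p : Fin d × Fin d) (h : p.1 ≠ p.2) : be p.swap = - be p := by
  unfold be
  rcases lt_or_gt_of_ne h with h1 | h1
  · simp [Prod.swap, h.symm, h, h1, not_lt_of_gt h1]
  · simp [Prod.swap, h.symm, h, h1, not_lt_of_gt h1]

lemma Uu_mem : Uu d ∈ Matrix.unitaryGroup (Fin d × Fin d) ℂ := by
  rw [Matrix.mem_unitaryGroup_iff']
  ext p q
  rw [Matrix.mul_apply]
  have hstar : ∀ r, (star (Uu d)) p r = (starRingEnd ℂ) ((Uu d) r p) := fun r => rfl
  simp only [hstar]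
  have hexp : ∀ r, (starRingEnd ℂ) ((Uu d) r p)
      = ((starRingEnd ℂ) (al p) * (if r = p then 1 else 0)
        + (starRingEnd ℂ) (be p) * (if r = p.swap then 1 else 0)) := by
    intro r
    simp only [Uu, Matrix.of_apply, map_add, _root_.map_mul]
    congr 1 <;> congr 1 <;> split_ifs <;> simp
  have hsum : ∑ r, (starRingEnd ℂ) ((Uu d) r p) * (Uu d) r q
      = (starRingEnd ℂ) (al p) * (Uu d) p q + (starRingEnd ℂ) (be p) * (Uu d) p.swap q := by
    rw [Finset.sum_congr rfl (fun r _ => by rw [hexp r])]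
    exact sum_pair p p.swap _ _ _
  rw [hsum, conj_al, conj_be]
  by_cases hpq : p = q
  · subst hpq
    rw [Matrix.one_apply_eq]
    by_cases hd : p.1 = p.2
    · have hsw : p.swap = p := by ext <;> simp [Prod.swap, hd]
      simp [Uu, al, be, hd, hsw]
    · have hsw : p.swap ≠ p := fun h => hd (by
        have := congrArg Prod.fst h; simpa [Prod.swap] using this.symm)
      simp only [Uu, Matrix.of_apply, if_pos rfl, if_neg hsw, if_neg (Ne.symm hsw),
        mul_one, mul_zero, add_zero, zero_add]
      simp only [al, be, if_neg hd]
      split_ifs with h1 <;>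
        · rw [show (1:ℂ) = 1/2 + 1/2 by norm_num]
          ring_nf
          rw [show ((cc:ℝ):ℂ)^2 = (cc:ℂ) * (cc:ℂ) by ring, cc_sqC]
          norm_num
  · rw [Matrix.one_apply_ne hpq]
    by_cases hqs : q = p.swap
    · subst hqs
      have hd : p.1 ≠ p.2 := fun h => hpq (by ext <;> simp [Prod.swap, h])
      have hsw : p ≠ p.swap := fun h => hpq h
      simp only [Uu, Matrix.of_apply, if_neg hsw, if_pos rfl, Prod.swap_swap,
        if_neg (Ne.symm hsw), mul_one, mul_zero, add_zero, zero_add]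
      rw [be_swap p hd]
      have hals : al p.swap = al p := by
        simp [al, Prod.swap, if_neg hd, if_neg (Ne.symm hd)]
      rw [hals]
      ring
    · have h1 : p ≠ q := hpq
      have h2 : p ≠ q.swap := fun h => hqs (by rw [h, Prod.swap_swap])
      have h3 : p.swap ≠ q := fun h => hqs h.symm
      have h4 : p.swap ≠ q.swap := fun h => hpq (by
        have := congrArg Prod.swap h; simpa using this)
      simp [Uu, if_neg h1, if_neg h2, if_neg h3, if_neg h4]


lemma conj_Uu (x y : Fin d × Fin d) : (starRingEnd ℂ) (Uu d x y)
    = al y * (if x = y then 1 else 0) + be y * (if x = y.swap then 1 else 0) := by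
  simp only [Uu, Matrix.of_apply, map_add, _root_.map_mul, conj_al, conj_be]
  congr 1 <;> congr 1 <;> split_ifs <;> simp

lemma swap_eq_iff {p r : Fin d × Fin d} : p = r.swap ↔ r = p.swap := by
  constructor <;> (intro h; simp [h, Prod.swap_swap])

lemma Uu_row (p r : Fin d × Fin d) : Uu d p r
    = al p * (if r = p then 1 else 0) + be p.swap * (if r = p.swap then 1 else 0) := by
  simp only [Uu, Matrix.of_apply]
  by_cases h1 : r = p <;> by_cases h2 : r = p.swap
  · subst h1
    simp [← h2]
  · subst h1
    simp [h2]
  · subst h2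
    have h3 : ¬ p = p.swap := fun h => h1 h.symm
    simp [Prod.swap_swap, h1, h3]
  · have h3 : ¬ p = r := fun h => h1 h.symm
    have h4 : ¬ p = r.swap := fun h => h2 (swap_eq_iff.mp h)
    simp [h1, h2, h3, h4]

lemma be_mul_be (p : Fin d × Fin d) (h : p.1 ≠ p.2) : be p * be p = (cc:ℂ) * (cc:ℂ) := by
  simp only [be, if_neg h]
  split_ifs <;> ring

lemma Dv_swap (lam : Fin d → ℝ) (p : Fin d × Fin d) (h : p.1 ≠ p.2) :
    Dv lam p.swap = - Dv lam p := by
  rcases lt_or_gt_of_ne h with h1 | h1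
  · simp [Dv, Prod.swap, le_of_lt h1, not_le_of_gt h1, mul_comm]
  · simp [Dv, Prod.swap, le_of_lt h1, not_le_of_gt h1, mul_comm]

lemma Mm_eq (lam : Fin d → ℝ) :
    Mm lam = Uu d * Matrix.diagonal (fun p => ((Dv lam p : ℝ) : ℂ)) * star (Uu d) := by
  ext p q
  rw [Matrix.mul_assoc, Matrix.mul_apply]
  have hinner : ∀ r, (Matrix.diagonal (fun p => ((Dv lam p : ℝ) : ℂ)) * star (Uu d)) r q
      = ((Dv lam r : ℝ) : ℂ) * (starRingEnd ℂ) (Uu d q r) := by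
    intro r
    rw [Matrix.diagonal_mul]
    rfl
  have hsum : ∑ r, Uu d p r * (Matrix.diagonal (fun p => ((Dv lam p : ℝ) : ℂ)) * star (Uu d)) r q
      = al p * (((Dv lam p : ℝ) : ℂ) * (starRingEnd ℂ) (Uu d q p))
        + be p.swap * (((Dv lam p.swap : ℝ) : ℂ) * (starRingEnd ℂ) (Uu d q p.swap)) := by
    rw [Finset.sum_congr rfl (fun r _ => by rw [hinner r, Uu_row p r])]
    exact sum_pair p p.swap _ _ _
  rw [hsum, conj_Uu, conj_Uu, Prod.swap_swap]
  by_cases hd : p.1 = p.2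
  · have hsw : p.swap = p := by ext <;> simp [Prod.swap, hd]
    have hbe : be p = 0 := by simp [be, hd]
    have hal : al p = 1 := by simp [al, hd]
    have hDv : Dv lam p = lam p.1 * lam p.2 := by simp [Dv, hd]
    rw [hsw, hbe, hal]
    by_cases hq : q = p <;> simp [Mm, hq, hsw, hDv]
  · have hsw : p.swap ≠ p := fun h => hd (by
      have := congrArg Prod.fst h; simpa [Prod.swap] using this.symm)
    have hal : al p = (cc : ℂ) := by simp [al, hd]
    have hals : al p.swap = (cc : ℂ) := by
      simp [al, Prod.swap, if_neg (Ne.symm hd)]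
    have hDsw := Dv_swap lam p hd
    have hMpq : Mm lam p q = if q = p.swap then ((lam p.1 * lam p.2 : ℝ) : ℂ) else 0 := rfl
    rw [hMpq]
    by_cases hq : q = p
    · rw [if_neg (fun h : q = p.swap => hsw (h ▸ hq ▸ rfl)), hq]
      rw [if_pos rfl, if_neg (fun h : p = p.swap => hsw h.symm)]
      rw [be_swap p hd, hal, hDsw]
      push_cast
      linear_combination ((Dv lam p : ℂ)) * be_mul_be p hd
    · by_cases hqs : q = p.swap
      · rw [if_pos hqs, hqs]
        rw [if_neg (fun h : p.swap = p => hsw h), if_pos rfl]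
        rw [be_swap p hd, hal, hals, hDsw]
        rcases lt_or_gt_of_ne hd with h1 | h1
        · have hbe : be p = (cc : ℂ) := by simp [be, hd, h1]
          have hDv : Dv lam p = lam p.1 * lam p.2 := by simp [Dv, le_of_lt h1]
          rw [hbe, hDv]
          push_cast
          linear_combination (-2 * ((lam p.1 : ℂ) * (lam p.2 : ℂ))) * cc_sqC
        · have hbe : be p = -(cc : ℂ) := by
            simp [be, hd, not_lt_of_gt h1]
          have hDv : Dv lam p = -(lam p.1 * lam p.2) := by
            simp [Dv, not_le_of_gt h1]
          rw [hbe, hDv]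
          push_cast
          linear_combination (-2 * ((lam p.1 : ℂ) * (lam p.2 : ℂ))) * cc_sqC
      · rw [if_neg hqs, if_neg hq, if_neg (fun h : q = p.swap => hqs h)]
        ring


lemma Mm_herm (lam : Fin d → ℝ) : (Mm lam).IsHermitian := by
  rw [Matrix.IsHermitian]
  ext p q
  rw [Matrix.conjTranspose_apply]
  show (starRingEnd ℂ) (Mm lam q p) = Mm lam p q
  show (starRingEnd ℂ) (if p = q.swap then ((lam q.1 * lam q.2 : ℝ) : ℂ) else 0)
    = (if q = p.swap then ((lam p.1 * lam p.2 : ℝ) : ℂ) else 0)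
  by_cases h : q = p.swap
  · rw [if_pos h, if_pos (swap_eq_iff.mpr h), h, Complex.conj_ofReal]
    simp [Prod.swap, mul_comm]
  · rw [if_neg h, if_neg (fun h2 => h (swap_eq_iff.mp h2)), map_zero]

lemma psi_apply (lam : Fin d → ℝ) (p : Fin d × Fin d) :
    (∑ j, (lam j : ℂ) • tensorVec (ket j) (ket j)) p
      = if p.1 = p.2 then (lam p.1 : ℂ) else 0 := by
  have h : (∑ j, (lam j : ℂ) • tensorVec (ket j) (ket j)) p
      = ∑ j, (lam j : ℂ) * ((if p.1 = j then 1 else 0) * (if p.2 = j then 1 else 0)) := by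
    simp [tensorVec, ket, Finset.sum_apply]
  rw [h, Finset.sum_eq_single p.1]
  · by_cases h2 : p.1 = p.2
    · rw [if_pos h2, if_pos rfl, if_pos h2.symm]; ring
    · rw [if_neg h2, if_pos rfl, if_neg (fun h3 => h2 h3.symm)]; ring
  · intro j _ hj
    rw [if_neg (fun h3 => hj h3.symm)]; ring
  · intro h; exact absurd (Finset.mem_univ p.1) h

lemma ptB_eq (lam : Fin d → ℝ) :
    ptB (vecProj (∑ j, (lam j : ℂ) • tensorVec (ket j) (ket j))) = Mm lam := by
  ext p q
  show (∑ j, (lam j : ℂ) • tensorVec (ket j) (ket j)) (p.1, q.2)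
      * (starRingEnd ℂ) ((∑ j, (lam j : ℂ) • tensorVec (ket j) (ket j)) (q.1, p.2))
    = (if q = p.swap then ((lam p.1 * lam p.2 : ℝ) : ℂ) else 0)
  rw [psi_apply, psi_apply]
  simp only
  by_cases h1 : p.1 = q.2 <;> by_cases h2 : q.1 = p.2
  · have hq : q = p.swap := by
      obtain ⟨q1, q2⟩ := q
      obtain ⟨p1, p2⟩ := p
      simp only [Prod.swap_prod_mk, Prod.mk.injEq]
      exact ⟨h2, h1.symm⟩
    rw [if_pos h1, if_pos h2, if_pos hq, Complex.conj_ofReal, h2]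
    push_cast; ring
  · have hq : ¬ q = p.swap := fun h => h2 (by rw [h]; rfl)
    rw [if_pos h1, if_neg h2, if_neg hq, map_zero, mul_zero]
  · have hq : ¬ q = p.swap := fun h => h1 (by rw [h]; rfl)
    rw [if_neg h1, if_neg hq, zero_mul]
  · have hq : ¬ q = p.swap := fun h => h2 (by rw [h]; rfl)
    rw [if_neg h1, if_neg hq, zero_mul]

lemma final_sum (lam : Fin d → ℝ) (hnn : ∀ j, 0 ≤ lam j) (hsum : ∑ j, (lam j) ^ 2 = 1) :
    ∑ p : Fin d × Fin d, max 0 (-(Dv lam p)) = ((∑ j, lam j) ^ 2 - 1) / 2 := by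
  have hmu : ∀ p : Fin d × Fin d, 0 ≤ lam p.1 * lam p.2 :=
    fun p => mul_nonneg (hnn _) (hnn _)
  have hpt : ∀ p : Fin d × Fin d, max 0 (-(Dv lam p))
      = if p.2 < p.1 then lam p.1 * lam p.2 else 0 := by
    intro p
    rw [Dv]
    by_cases h : p.1 ≤ p.2
    · rw [if_pos h, if_neg (not_lt_of_ge h), max_eq_left (by linarith [hmu p])]
    · rw [if_neg h, if_pos (lt_of_not_ge h), neg_neg, max_eq_right (hmu p)]
  rw [Finset.sum_congr rfl (fun p _ => hpt p)]
  have htot : ∑ p : Fin d × Fin d, lam p.1 * lam p.2 = (∑ j, lam j) ^ 2 := by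
    rw [Fintype.sum_prod_type, sq, Finset.sum_mul_sum]
  have hdiag : ∑ p : Fin d × Fin d, (if p.1 = p.2 then lam p.1 * lam p.2 else 0) = 1 := by
    rw [Fintype.sum_prod_type]
    have : ∀ i : Fin d, ∑ j, (if i = j then lam i * lam j else 0) = lam i ^ 2 := by
      intro i
      rw [Finset.sum_ite_eq Finset.univ i (fun j => lam i * lam j), if_pos (Finset.mem_univ i), sq]
    rw [Finset.sum_congr rfl (fun i _ => this i), hsum]
  have hsym : ∑ p : Fin d × Fin d, (if p.1 < p.2 then lam p.1 * lam p.2 else 0)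
      = ∑ p : Fin d × Fin d, (if p.2 < p.1 then lam p.1 * lam p.2 else 0) := by
    apply Fintype.sum_equiv (Equiv.prodComm (Fin d) (Fin d))
    intro p
    simp [Equiv.prodComm, mul_comm]
  have hsplit : ∑ p : Fin d × Fin d, lam p.1 * lam p.2
      = (∑ p : Fin d × Fin d, (if p.1 = p.2 then lam p.1 * lam p.2 else 0))
        + (∑ p : Fin d × Fin d, (if p.1 < p.2 then lam p.1 * lam p.2 else 0))
        + (∑ p : Fin d × Fin d, (if p.2 < p.1 then lam p.1 * lam p.2 else 0)) := by
    rw [← Finset.sum_add_distrib, ← Finset.sum_add_distrib]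
    apply Finset.sum_congr rfl
    intro p _
    rcases lt_trichotomy p.1 p.2 with h | h | h
    · rw [if_neg (ne_of_lt h), if_pos h, if_neg (lt_asymm h)]; ring
    · rw [if_pos h, if_neg (show ¬ p.1 < p.2 by rw [h]; exact lt_irrefl _),
          if_neg (show ¬ p.2 < p.1 by rw [h]; exact lt_irrefl _)]; ring
    · rw [if_neg (ne_of_gt h), if_neg (lt_asymm h), if_pos h]; ring
  rw [htot, hdiag, hsym] at hsplit
  linarith

end NegAux
end NegativityAux

/-- the negativity of a pure state with Schmidt coefficients `λ_j`
is `((∑_j λ_j)² - 1)/2`. -/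
theorem negativity_schmidt (d : ℕ) (hd : 1 ≤ d) (lam : Fin d → ℝ)
    (hnn : ∀ j, 0 ≤ lam j) (hsum : ∑ j, (lam j) ^ 2 = 1) :
    negativity (vecProj (∑ j, (lam j : ℂ) • tensorVec (ket j) (ket j))) =
      ((∑ j, lam j) ^ 2 - 1) / 2 := by
  have hPT := NegAux.ptB_eq lam
  have hHerm := NegAux.Mm_herm lam
  have hkey := eig_sum_fun hHerm (NegAux.Uu d) NegAux.Uu_mem (NegAux.Dv lam)
    (NegAux.Mm_eq lam) (fun x => max 0 (-x))
  simp only [negativity, hPT]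
  rw [dif_pos hHerm]
  exact hkey.trans (NegAux.final_sum lam hnn hsum)

end
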